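/- arXiv:2206.05987 — 2 statements merged into one kernel-verified Lean document; each statement's English description precedes it below -/
import Mathlib

section
/- Let A be a discrete valuation ring with maximal ideal (t), quotient field K, valuation v_t on K, and residue field F = A/(t) of characteristic 2. Let φ be an anisotropic quadratic form over F of dimension n, and let φ_l be a quadratic form over A whose reduction modulo (t) is isometric to φ. Then for every nonzero vector ξ = (ξ₁,…,ξₙ) ∈ Kⁿ one has φ_l(ξ) ≠ 0 and v_t(φ_l(ξ)) is even. -/
/-!
Background definitions for quadratic forms over fields of characteristic 2,
following the conventions of "Isotropy of quadratic forms over function fields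
in characteristic 2".  A quadratic form of dimension `n` over a commutative ring
`R` is represented by a coefficient matrix `c : ι → ι → R` (`ι` a finite index
type), the associated quadratic map being `x ↦ ∑ i j, c i j * x i * x j`; every
quadratic form on a finite-dimensional vector space (a map satisfying
`φ(av) = a²φ(v)` whose polar form is bilinear) arises this way.
-/

open scoped BigOperators Pointwise Classical

namespace QF2

variable {R S : Type*} [CommRing R] [CommRing S] {ι κ : Type} [Fintype ι] [Fintype κ]

/-- The value at `x` of the quadratic form with coefficient matrix `c`, namely
`∑ i j, c i j * x i * x j`. -/
def eval (c : ι → ι → R) (x : ι → R) : R := ∑ i, ∑ j, c i j * x i * x j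

/-- The polar form `b(x,y) = q(x+y) - q(x) - q(y)` of the quadratic form `c`. -/
def polar (c : ι → ι → R) (x y : ι → R) : R := ∑ i, ∑ j, c i j * (x i * y j + x j * y i)

/-- A quadratic form is isotropic if it vanishes on a nonzero vector. -/
def IsIsotropic (c : ι → ι → R) : Prop := ∃ x : ι → R, x ≠ 0 ∧ eval c x = 0

/-- Anisotropic: not isotropic. -/
abbrev IsAnisotropic (c : ι → ι → R) : Prop := ¬ IsIsotropic c

/-- Base change of a quadratic form along a ring homomorphism. -/
def map (σ : R →+* S) (c : ι → ι → R) : ι → ι → S := fun i j => σ (c i j)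

/-- Quasilinear (totally singular): the polar form vanishes identically. -/
def IsQuasilinear (c : ι → ι → R) : Prop := ∀ x y : ι → R, polar c x y = 0

/-- Nondefective (quasilinear index `i_d = 0`): no nonzero vector of the radical of the
polar form is isotropic. -/
def IsNondefective (c : ι → ι → R) : Prop :=
  ∀ x : ι → R, (∀ y, polar c x y = 0) → eval c x = 0 → x = 0

/-- `d` is isometric to `c`. -/
def Isometric (c : ι → ι → R) (d : κ → κ → R) : Prop :=
  ∃ g : (κ → R) ≃ₗ[R] (ι → R), ∀ x, eval d x = eval c (g x)

/-- `D_R^*(c)`: the set of nonzero represented elements. -/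
def reps (c : ι → ι → R) : Set R := {a | a ≠ 0 ∧ ∃ x : ι → R, eval c x = a}

/-- `D_R^*(c)^m`: products of `m` nonzero represented elements. -/
def repsPow (c : ι → ι → R) (m : ℕ) : Set R :=
  {a | ∃ v : Fin m → R, (∀ k, v k ∈ reps c) ∧ a = ∏ k, v k}

/-- The multiplicative subgroup of `F^*` generated by a set `s` of nonzero elements,
realized as a subset of `F` (products of elements of `s` and their inverses). -/
def genBy {F : Type*} [Field F] (s : Set F) : Set F :=
  ↑(Submonoid.closure (s ∪ Inv.inv '' s))

/-- `⟨D_F^*(c)⟩`: the subgroup generated by the nonzero represented elements. -/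
def genGroup {F : Type*} [Field F] (c : ι → ι → F) : Set F := genBy (reps c)

/-- `⟨D_F^*(c)²⟩`. -/
def genGroup2 {F : Type*} [Field F] (c : ι → ι → F) : Set F := genBy (repsPow c 2)

/-- The scaled quadratic form `a·c`. -/
def smulQF (a : R) (c : ι → ι → R) : ι → ι → R := fun i j => a * c i j

/-- Orthogonal sum of two quadratic forms. -/
def orthSum (c : ι → ι → R) (d : κ → κ → R) : (ι ⊕ κ) → (ι ⊕ κ) → R
  | Sum.inl i, Sum.inl j => c i j
  | Sum.inr i, Sum.inr j => d i j
  | _, _ => 0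

lemma eval_add (c : ι → ι → R) (x y : ι → R) :
    eval c (x + y) = eval c x + eval c y + polar c x y := by
  unfold eval polar
  rw [← Finset.sum_add_distrib, ← Finset.sum_add_distrib]
  refine Finset.sum_congr rfl fun i _ => ?_
  rw [← Finset.sum_add_distrib, ← Finset.sum_add_distrib]
  refine Finset.sum_congr rfl fun j _ => ?_
  simp only [Pi.add_apply]; ring

lemma polar_add_left (c : ι → ι → R) (x x' y : ι → R) :
    polar c (x + x') y = polar c x y + polar c x' y := by
  unfold polar
  rw [← Finset.sum_add_distrib]
  refine Finset.sum_congr rfl fun i _ => ?_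
  rw [← Finset.sum_add_distrib]
  refine Finset.sum_congr rfl fun j _ => ?_
  simp only [Pi.add_apply]; ring

lemma polar_smul_left (c : ι → ι → R) (a : R) (x y : ι → R) :
    polar c (a • x) y = a * polar c x y := by
  unfold polar
  rw [Finset.mul_sum]
  refine Finset.sum_congr rfl fun i _ => ?_
  rw [Finset.mul_sum]
  refine Finset.sum_congr rfl fun j _ => ?_
  simp only [Pi.smul_apply, smul_eq_mul]; ring

lemma eval_smul (c : ι → ι → R) (a : R) (x : ι → R) :
    eval c (a • x) = a ^ 2 * eval c x := by
  unfold eval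
  rw [Finset.mul_sum]
  refine Finset.sum_congr rfl fun i _ => ?_
  rw [Finset.mul_sum]
  refine Finset.sum_congr rfl fun j _ => ?_
  simp only [Pi.smul_apply, smul_eq_mul]; ring

/-- The defect of a quadratic form: the submodule of isotropic vectors lying in the
radical of the polar form. -/
def defectSubmodule (c : ι → ι → R) : Submodule R (ι → R) where
  carrier := {x | (∀ y, polar c x y = 0) ∧ eval c x = 0}
  zero_mem' := by
    constructor
    · intro y; unfold polar; simp
    · unfold eval; simp
  add_mem' := by
    rintro x x' ⟨hx1, hx2⟩ ⟨hx1', hx2'⟩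
    refine ⟨fun y => ?_, ?_⟩
    · rw [polar_add_left, hx1 y, hx1' y, add_zero]
    · rw [eval_add, hx2, hx2', hx1 x', add_zero, add_zero]
  smul_mem' := by
    rintro a x ⟨hx1, hx2⟩
    refine ⟨fun y => ?_, ?_⟩
    · rw [polar_smul_left, hx1 y, mul_zero]
    · rw [eval_smul, hx2, mul_zero]

/-- The quasilinear index (defect) `i_d` of a quadratic form. -/
noncomputable def defectIndex (c : ι → ι → R) : ℕ :=
  Module.finrank R (defectSubmodule c)

/-- The total isotropy index `i_t`: the dimension of a maximal totally isotropic
subspace. -/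
noncomputable def totalIndex (c : ι → ι → R) : ℕ :=
  sSup {m | ∃ W : Submodule R (ι → R), (∀ x ∈ W, eval c x = 0) ∧ Module.finrank R W = m}

/-- The Witt index `i_W = i_t - i_d`. -/
noncomputable def wittIndex (c : ι → ι → R) : ℕ := totalIndex c - defectIndex c

variable {F : Type u} [Field F]

/-- The homogeneous quadratic polynomial `φ(X_1, …, X_n)` attached to a quadratic form. -/
noncomputable def poly (c : ι → ι → F) : MvPolynomial ι F :=
  ∑ i, ∑ j, MvPolynomial.C (c i j) * (MvPolynomial.X i * MvPolynomial.X j)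

/-- The canonical map from `F` to the total fraction ring of `A/(f)`; when `f` is
irreducible, the target is the function field `F(f)`. -/
noncomputable def ffHom {A : Type*} [CommRing A] (σ : F →+* A) (f : A) :
    F →+* FractionRing (A ⧸ Ideal.span {f}) :=
  (algebraMap (A ⧸ Ideal.span {f}) (FractionRing (A ⧸ Ideal.span {f}))).comp
    ((Ideal.Quotient.mk (Ideal.span {f})).comp σ)

/-- The canonical map from `R` into (the total fraction ring of) `R[X_i : i ∈ κ]`;
for a field this is the inclusion into the rational function field `F(X_i : i ∈ κ)`. -/
noncomputable def ratHom (κ : Type) (R : Type*) [CommRing R] :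
    R →+* FractionRing (MvPolynomial κ R) :=
  (algebraMap (MvPolynomial κ R) (FractionRing (MvPolynomial κ R))).comp MvPolynomial.C

/-- The canonical map from `F` into the rational function field `F(X)`. -/
noncomputable def ratHom1 (F : Type u) [Field F] : F →+* FractionRing (Polynomial F) :=
  (algebraMap (Polynomial F) (FractionRing (Polynomial F))).comp Polynomial.C

/-- `φ_{F(ψ)}` is isotropic, where `F(ψ)` is the function field of the quadratic form `ψ`.
When the polynomial of `ψ` is irreducible this is the quotient field of `F[X]/(ψ(X))`;
otherwise (`ψ ≅ ⟨a⟩`, `ψ ≅ ℍ`, or degenerate defective cases) `F(ψ)` is a purely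
transcendental extension of `F`, over which isotropy is equivalent to isotropy over `F`. -/
def IsotropicOverFunField (c : ι → ι → F) (d : κ → κ → F) : Prop :=
  (Irreducible (poly d) → IsIsotropic (map (ffHom MvPolynomial.C (poly d)) c)) ∧
  (¬ Irreducible (poly d) → IsIsotropic c)

/-- Stable birational equivalence of (nondefective) quadratic forms:
`φ_{F(ψ)}` and `ψ_{F(φ)}` are both isotropic. -/
def StbEquiv (c : ι → ι → F) (d : κ → κ → F) : Prop :=
  IsotropicOverFunField c d ∧ IsotropicOverFunField d c

/-- The leading coefficient of a multivariate polynomial with respect to the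
lexicographic ordering on monomials. -/
noncomputable def lexLC {l : ℕ} {F : Type*} [CommSemiring F] (f : MvPolynomial (Fin l) F) : F :=
  if h : f = 0 then 0
  else f.coeff (ofLex ((f.support.image (toLex : (Fin l →₀ ℕ) → Lex (Fin l →₀ ℕ))).max'
    (Finset.Nonempty.image (MvPolynomial.support_nonempty.mpr h) _)))

/-- The coefficient matrix of the tensor product `π ⊗ φ` of the bilinear Pfister form
`π = ⟨⟨a 1, …, a n⟩⟩_b` with the quadratic form `c` (with respect to the standard basis,
`π ⊗ φ ≅ ⊥_{S ⊆ {1,…,n}} (∏_{i ∈ S} a i) φ`). -/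
def pfisterMul {n : ℕ} (a : Fin n → R) (c : ι → ι → R) :
    ((Fin n → Bool) × ι) → ((Fin n → Bool) × ι) → R :=
  fun p q =>
    if p.1 = q.1 then (∏ i, if p.1 i then a i else 1) * c p.2 q.2 else 0



lemma eval_map' {R S : Type*} [CommRing R] [CommRing S] {ι : Type} [Fintype ι]
    (σ : R →+* S) (c : ι → ι → R) (x : ι → R) :
    eval (map σ c) (fun i => σ (x i)) = σ (eval c x) := by
  simp [eval, map, map_sum, map_mul]

/-- Let `A` be a discrete valuation ring with maximal ideal `(t)`,
quotient field `K`, and residue field `F` of characteristic 2.  Let `φ` be an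
anisotropic quadratic form over `F` and `φl` a quadratic form over `A` whose reduction
modulo `(t)` is isometric to `φ`.  Then for every nonzero vector `ξ` over `K` we have
`φl(ξ) ≠ 0` and the `t`-adic valuation `v_t(φl(ξ))` is even, i.e. `φl(ξ) = u·t^(2k)`
for a unit `u` of `A` and some `k : ℤ`. -/
theorem stmt1 {A : Type*} [CommRing A] [IsDomain A] [IsDiscreteValuationRing A]
    [CharP (IsLocalRing.ResidueField A) 2]
    (t : A) (ht : IsLocalRing.maximalIdeal A = Ideal.span {t})
    {ι : Type} [Fintype ι]
    (φ : ι → ι → IsLocalRing.ResidueField A) (φl : ι → ι → A)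
    (hred : Isometric φ (map (IsLocalRing.residue A) φl))
    (han : IsAnisotropic φ)
    (ξ : ι → FractionRing A) (hξ : ξ ≠ 0) :
    eval (map (algebraMap A (FractionRing A)) φl) ξ ≠ 0 ∧
      ∃ (u : Aˣ) (k : ℤ),
        eval (map (algebraMap A (FractionRing A)) φl) ξ =
          algebraMap A (FractionRing A) ↑u * algebraMap A (FractionRing A) t ^ (2 * k) := by
  classical
  have htirr : Irreducible t := (IsDiscreteValuationRing.irreducible_iff_uniformizer t).mpr ht
  set f := algebraMap A (FractionRing A) with hf
  have hfinj : Function.Injective f := IsFractionRing.injective A (FractionRing A)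
  have hft : f t ≠ 0 := fun h => htirr.ne_zero (hfinj (by rw [h, map_zero]))
  obtain ⟨b, hb⟩ := IsLocalization.exist_integer_multiples_of_finite (nonZeroDivisors A) ξ
  have hb' : ∀ i, ∃ a : A, f a = (b : A) • ξ i := fun i => hb i
  choose c hc using hb'
  have hbne : (b : A) ≠ 0 := nonZeroDivisors.coe_ne_zero b
  have hfb : f ↑b ≠ 0 := fun h => hbne (hfinj (by rw [h, map_zero]))
  have hxi : ∀ i, ξ i = (f ↑b)⁻¹ * f (c i) := by
    intro i
    rw [hc i, Algebra.smul_def]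
    field_simp
    rfl
  have hcne : c ≠ 0 := by
    intro h
    apply hξ
    funext i
    have h2 := hxi i
    rw [congrFun h i] at h2
    simpa using h2
  have hI : Ideal.span (Set.range c) ≠ ⊥ := by
    intro h
    apply hcne
    funext i
    have hmem : c i ∈ Ideal.span (Set.range c) := Ideal.subset_span ⟨i, rfl⟩
    rw [h] at hmem
    exact Ideal.mem_bot.mp hmem
  obtain ⟨d, hd⟩ := IsDiscreteValuationRing.ideal_eq_span_pow_irreducible hI htirr
  have hdvd : ∀ i, t ^ d ∣ c i := fun i =>
    Ideal.mem_span_singleton.mp (hd ▸ Ideal.subset_span ⟨i, rfl⟩)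
  choose c' hc' using hdvd
  have hex : ∃ i, ¬ t ∣ c' i := by
    by_contra h
    push_neg at h
    have htd : t ^ d ∈ Ideal.span (Set.range c) := hd ▸ Ideal.mem_span_singleton_self _
    have hle : Ideal.span (Set.range c) ≤ Ideal.span {t ^ (d + 1)} := by
      rw [Ideal.span_le]
      rintro _ ⟨i, rfl⟩
      rw [SetLike.mem_coe, Ideal.mem_span_singleton]
      obtain ⟨w, hw⟩ := h i
      exact ⟨w, by rw [hc' i, hw, pow_succ]; ring⟩
    have hdd : t ^ (d + 1) ∣ t ^ d := Ideal.mem_span_singleton.mp (hle htd)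
    have h0 : t ^ d ≠ 0 := pow_ne_zero _ htirr.ne_zero
    rw [pow_succ] at hdd
    have h1 : t ∣ 1 := (mul_dvd_mul_iff_left h0).mp (by simpa using hdd)
    exact htirr.not_isUnit (isUnit_of_dvd_one h1)
  obtain ⟨i0, hi0⟩ := hex
  set r := eval φl c' with hr
  have hrres : IsLocalRing.residue A r ≠ 0 := by
    obtain ⟨g, hg⟩ := hred
    have h1 : IsLocalRing.residue A r
        = eval (map (IsLocalRing.residue A) φl) (fun i => IsLocalRing.residue A (c' i)) :=
      (eval_map' _ _ _).symm
    have hv : (fun i => IsLocalRing.residue A (c' i)) ≠ 0 := by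
      intro h
      apply hi0
      have h2 := congrFun h i0
      simp only [Pi.zero_apply] at h2
      rw [IsLocalRing.residue_eq_zero_iff, ht, Ideal.mem_span_singleton] at h2
      exact h2
    rw [h1, hg]
    intro h0
    exact han ⟨g _, fun hz => hv (g.map_eq_zero_iff.mp hz), h0⟩
  have hru : IsUnit r := by
    by_contra h
    exact hrres ((IsLocalRing.residue_eq_zero_iff _).mpr ((IsLocalRing.mem_maximalIdeal _).mpr h))
  obtain ⟨ur, hur⟩ := hru
  obtain ⟨e, ub, hub⟩ := IsDiscreteValuationRing.eq_unit_mul_pow_irreducible hbne htirr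
  have hxy : ξ = ((f ↑b)⁻¹ * f t ^ d) • (fun i => f (c' i)) := by
    funext i
    simp only [Pi.smul_apply, smul_eq_mul]
    rw [hxi i, hc' i, map_mul, map_pow]
    ring
  have heval : eval (map f φl) ξ = ((f ↑b)⁻¹ * f t ^ d) ^ 2 * f r := by
    rw [hxy, eval_smul, eval_map']
  have hfr : f r ≠ 0 := fun h => (hur ▸ ur.ne_zero) (hfinj (by rw [h, map_zero]))
  have hint : (2 : ℤ) * ((d : ℤ) - e) = ((2 * d : ℕ) : ℤ) - ((2 * e : ℕ) : ℤ) := by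
    push_cast; ring
  have hz : f t ^ ((2 : ℤ) * ((d : ℤ) - e)) = f t ^ (2 * d) * (f t ^ (2 * e))⁻¹ := by
    rw [hint, zpow_sub₀ hft, zpow_natCast, zpow_natCast, div_eq_mul_inv]
  refine ⟨?_, ur * ub⁻¹ * ub⁻¹, (d : ℤ) - e, ?_⟩
  · rw [heval]
    exact mul_ne_zero (pow_ne_zero _ (mul_ne_zero (inv_ne_zero hfb) (pow_ne_zero _ hft))) hfr
  · have hbK : f ↑b = f ↑ub * f t ^ e := by rw [hub, map_mul, map_pow]
    have hinv : f ↑(ub⁻¹) = (f ↑ub)⁻¹ :=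
      eq_inv_of_mul_eq_one_left (by rw [← map_mul, Units.inv_mul, map_one])
    have hfub : f ↑ub ≠ 0 := fun h => ub.ne_zero (hfinj (by rw [h, map_zero]))
    have hfr' : f r = f ↑ur := by rw [hur]
    rw [heval, hz, hbK, Units.val_mul, Units.val_mul, map_mul, map_mul, hinv, hfr']
    field_simp
    ring


end QF2
end

section
/- Let F be a field of characteristic 2, f ∈ F[X] a monic irreducible polynomial in one variable, and φ a nondefective quadratic form over F of dimension n. Suppose that f divides φ(ξ₁,…,ξₙ) for some ξ₁,…,ξₙ ∈ F[X], not all of them divisible by f. Then f ∈ D_{F(X)}^*(φ)^m for some m ≤ deg f. -/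
/-!
Background definitions for quadratic forms over fields of characteristic 2,
following the conventions of "Isotropy of quadratic forms over function fields
in characteristic 2".  A quadratic form of dimension `n` over a commutative ring
`R` is represented by a coefficient matrix `c : ι → ι → R` (`ι` a finite index
type), the associated quadratic map being `x ↦ ∑ i j, c i j * x i * x j`; every
quadratic form on a finite-dimensional vector space (a map satisfying
`φ(av) = a²φ(v)` whose polar form is bilinear) arises this way.
-/

open scoped BigOperators Pointwise Classical

namespace QF2

variable {R S : Type*} [CommRing R] [CommRing S] {ι κ : Type} [Fintype ι] [Fintype κ]

variable {F : Type u} [Field F]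

/-! ### Auxiliary lemmas for Statement 7 -/

section Stmt7Aux

lemma eval_ringHom_map (σ : R →+* S) (c : ι → ι → R) (x : ι → R) :
    eval (map σ c) (fun i => σ (x i)) = σ (eval c x) := by
  simp [eval, map, map_sum]

lemma polar_ringHom_map (σ : R →+* S) (c : ι → ι → R) (x y : ι → R) :
    polar (map σ c) (fun i => σ (x i)) (fun i => σ (y i)) = σ (polar c x y) := by
  simp [polar, map, map_sum]

lemma polar_comm' (c : ι → ι → R) (x y : ι → R) :
    polar c x y = polar c y x := by
  unfold polar
  refine Finset.sum_congr rfl fun i _ => Finset.sum_congr rfl fun j _ => ?_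
  ring

lemma repsPow_one_of_reps {c : ι → ι → R} {a : R} (h : a ∈ reps c) : a ∈ repsPow c 1 :=
  ⟨fun _ => a, fun _ => h, by simp⟩

lemma repsPow_mul_mem {c : ι → ι → R} {a b : R} {m k : ℕ}
    (ha : a ∈ repsPow c m) (hb : b ∈ repsPow c k) :
    a * b ∈ repsPow c (m + k) := by
  obtain ⟨v, hv, rfl⟩ := ha
  obtain ⟨w, hw, rfl⟩ := hb
  refine ⟨Fin.append v w, fun j => ?_, ?_⟩
  · refine Fin.addCases (fun i => ?_) (fun i => ?_) j
    · rw [Fin.append_left]; exact hv i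
    · rw [Fin.append_right]; exact hw i
  · rw [Fin.prod_univ_add]
    simp [Fin.append_left, Fin.append_right]

lemma repsPow_multiset_prod {F : Type*} [Field F] {K : Type*} [CommRing K] {ι : Type}
    [Fintype ι] (c : ι → ι → K) (φ : Polynomial F →+* K) :
    ∀ P : Multiset (Polynomial F),
      (∀ p ∈ P, ∃ m ≤ p.natDegree, φ p ∈ repsPow c m) →
      ∃ M ≤ (P.map Polynomial.natDegree).sum, φ P.prod ∈ repsPow c M := by
  intro P
  induction P using Multiset.induction_on with
  | empty =>
    intro _
    refine ⟨0, le_rfl, ?_⟩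
    refine ⟨Fin.elim0, fun k => k.elim0, ?_⟩
    simp
  | cons p P ih =>
    intro h
    obtain ⟨m, hm, hmem⟩ := h p (Multiset.mem_cons_self _ _)
    obtain ⟨M, hM, hMem⟩ := ih fun q hq => h q (Multiset.mem_cons_of_mem hq)
    refine ⟨m + M, ?_, ?_⟩
    · rw [Multiset.map_cons, Multiset.sum_cons]; omega
    · rw [Multiset.prod_cons, map_mul]; exact repsPow_mul_mem hmem hMem

lemma coeff_mul_of_natDegree_le' {F : Type*} [Field F] {p q : Polynomial F} {d : ℕ}
    (hp : p.natDegree ≤ d) (hq : q.natDegree ≤ d) :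
    (p * q).coeff (d + d) = p.coeff d * q.coeff d := by
  rw [Polynomial.coeff_mul]
  rw [Finset.sum_eq_single (d, d)]
  · rintro ⟨a, b⟩ hab hne
    rw [Finset.HasAntidiagonal.mem_antidiagonal] at hab
    rcases lt_trichotomy a d with h | h | h
    · have hb : d < b := by omega
      rw [Polynomial.coeff_eq_zero_of_natDegree_lt (lt_of_le_of_lt hq hb), mul_zero]
    · exact absurd (by simp only [Prod.mk.injEq]; omega : (a, b) = (d, d)) hne
    · rw [Polynomial.coeff_eq_zero_of_natDegree_lt (lt_of_le_of_lt hp h), zero_mul]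
  · intro h
    simp at h


lemma coeff_eval {F : Type*} [Field F] {ι : Type} [Fintype ι]
    (c : ι → ι → F) (ξ : ι → Polynomial F) {d : ℕ} (hd : ∀ i, (ξ i).natDegree ≤ d) :
    (eval (map (Polynomial.C : F →+* Polynomial F) c) ξ).coeff (d + d)
      = eval c (fun i => (ξ i).coeff d) := by
  simp only [eval, map]
  rw [Polynomial.finset_sum_coeff]
  refine Finset.sum_congr rfl fun i _ => ?_
  rw [Polynomial.finset_sum_coeff]
  refine Finset.sum_congr rfl fun j _ => ?_
  rw [mul_assoc, Polynomial.coeff_C_mul, coeff_mul_of_natDegree_le' (hd i) (hd j), mul_assoc]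

lemma natDegree_eval_le {F : Type*} [Field F] {ι : Type} [Fintype ι]
    (c : ι → ι → F) (ξ : ι → Polynomial F) {d : ℕ} (hd : ∀ i, (ξ i).natDegree ≤ d) :
    (eval (map (Polynomial.C : F →+* Polynomial F) c) ξ).natDegree ≤ d + d := by
  simp only [eval, map]
  refine Polynomial.natDegree_sum_le_of_forall_le _ _ fun i _ => ?_
  refine Polynomial.natDegree_sum_le_of_forall_le _ _ fun j _ => ?_
  refine le_trans (Polynomial.natDegree_mul_le) ?_
  have h1 : (Polynomial.C (c i j) * ξ i).natDegree ≤ d :=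
    le_trans Polynomial.natDegree_mul_le (by simp [Polynomial.natDegree_C, hd i])
  have h2 := hd j
  omega

lemma aniso_info {F : Type*} [Field F] {ι : Type} [Fintype ι]
    (c : ι → ι → F) (hc : IsAnisotropic c) (ξ : ι → Polynomial F) (hξ : ξ ≠ 0) :
    ∃ v : ι → F, eval c v ≠ 0 ∧
      (eval (map (Polynomial.C : F →+* Polynomial F) c) ξ).natDegree
        = (Finset.univ.sup fun i => (ξ i).natDegree) + (Finset.univ.sup fun i => (ξ i).natDegree) ∧
      (eval (map (Polynomial.C : F →+* Polynomial F) c) ξ).leadingCoeff = eval c v := by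
  classical
  set d := Finset.univ.sup fun i => (ξ i).natDegree with hd
  have hdle : ∀ i, (ξ i).natDegree ≤ d := by
    intro i; rw [hd]; exact Finset.le_sup (f := fun i => (ξ i).natDegree) (Finset.mem_univ i)
  obtain ⟨j, hj⟩ := Function.ne_iff.mp hξ
  have hj : ξ j ≠ 0 := hj
  have hvne : (fun i => (ξ i).coeff d) ≠ 0 := by
    obtain ⟨i₀, -, hi₀⟩ := Finset.exists_mem_eq_sup Finset.univ ⟨j, Finset.mem_univ j⟩
      (fun i => (ξ i).natDegree)
    rw [← hd] at hi₀
    by_cases h0 : ξ i₀ = 0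
    · have hd0 : d = 0 := by rw [hi₀, h0, Polynomial.natDegree_zero]
      refine Function.ne_iff.mpr ⟨j, ?_⟩
      have hdj : (ξ j).natDegree = 0 := le_antisymm (hd0 ▸ hdle j) (Nat.zero_le _)
      show (ξ j).coeff d ≠ 0
      rw [hd0, ← hdj, Polynomial.coeff_natDegree]
      exact Polynomial.leadingCoeff_ne_zero.mpr hj
    · refine Function.ne_iff.mpr ⟨i₀, ?_⟩
      show (ξ i₀).coeff d ≠ 0
      rw [hi₀, Polynomial.coeff_natDegree]
      exact Polynomial.leadingCoeff_ne_zero.mpr h0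
  have hev : eval c (fun i => (ξ i).coeff d) ≠ 0 := fun h => hc ⟨_, hvne, h⟩
  have hcoeff := coeff_eval c ξ hdle
  have hbound := natDegree_eval_le c ξ hdle
  have hne : (eval (map (Polynomial.C : F →+* Polynomial F) c) ξ).coeff (d + d) ≠ 0 := by
    rw [hcoeff]; exact hev
  have hdeg : (eval (map (Polynomial.C : F →+* Polynomial F) c) ξ).natDegree = d + d :=
    le_antisymm hbound (Polynomial.le_natDegree_of_ne_zero hne)
  exact ⟨_, hev, hdeg, by rw [Polynomial.leadingCoeff, hdeg, hcoeff]⟩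

lemma eval_ne_zero_of_aniso {F : Type*} [Field F] {ι : Type} [Fintype ι]
    (c : ι → ι → F) (hc : IsAnisotropic c) (ξ : ι → Polynomial F) (hξ : ξ ≠ 0) :
    eval (map (Polynomial.C : F →+* Polynomial F) c) ξ ≠ 0 := by
  obtain ⟨v, hv, -, hlead⟩ := aniso_info c hc ξ hξ
  intro h
  rw [h, Polynomial.leadingCoeff_zero] at hlead
  exact hv hlead.symm

lemma inner_lemma {F : Type u} [Field F] {ι : Type} [Fintype ι]
    (c : ι → ι → F) (hc : IsAnisotropic c)
    (f : Polynomial F) (hmonic : f.Monic) (hirr : Irreducible f)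
    (IH : ∀ p : Polynomial F, p.natDegree < f.natDegree → p.Monic → Irreducible p →
      ∀ ξ : ι → Polynomial F, p ∣ eval (map (Polynomial.C : F →+* Polynomial F) c) ξ →
      (¬ ∀ i, p ∣ ξ i) →
      ∃ m ≤ p.natDegree,
        algebraMap (Polynomial F) (FractionRing (Polynomial F)) p
          ∈ repsPow (map (ratHom1 F) c) m) :
    ∀ (k : ℕ) (g : Polynomial F) (ξ : ι → Polynomial F), g.natDegree < k → g ≠ 0 → ξ ≠ 0 →
      g.natDegree + 2 ≤ f.natDegree →
      eval (map (Polynomial.C : F →+* Polynomial F) c) ξ = f * g →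
      ∃ m ≤ g.natDegree + 2,
        algebraMap (Polynomial F) (FractionRing (Polynomial F)) f
          ∈ repsPow (map (ratHom1 F) c) m := by
  intro k
  induction k with
  | zero => intro g ξ h; omega
  | succ k ihk =>
    intro g ξ hk hg0 hξ0 hdeg heq
    by_cases hcaseA : ∃ p ∈ UniqueFactorizationMonoid.normalizedFactors g, ∀ i, p ∣ ξ i
    · obtain ⟨p, hpP, hpdvd⟩ := hcaseA
      have hpirr : Irreducible p :=
        UniqueFactorizationMonoid.irreducible_of_normalized_factor p hpP
      have hpmonic : p.Monic := by
        have hnp := UniqueFactorizationMonoid.normalize_normalized_factor p hpP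
        rw [← hnp]; exact Polynomial.monic_normalize hpirr.ne_zero
      obtain ⟨η, hηdef⟩ : ∃ η : ι → Polynomial F, η = fun i => ξ i /ₘ p := ⟨_, rfl⟩
      have hξη : ξ = p • η := by
        funext i
        have h1 := Polynomial.modByMonic_add_div (ξ i) p
        rw [(Polynomial.modByMonic_eq_zero_iff_dvd hpmonic).mpr (hpdvd i)] at h1
        rw [hηdef]
        simpa using h1.symm
      have hη0 : η ≠ (0 : ι → Polynomial F) := by
        intro h; apply hξ0; rw [hξη, h, smul_zero]
      have hpf : ¬ p ∣ f := by
        intro hdvdf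
        obtain ⟨t, ht⟩ := hdvdf
        have htu : IsUnit t := (hirr.isUnit_or_isUnit ht).resolve_left hpirr.not_isUnit
        have ht0 : t ≠ 0 := fun h => hmonic.ne_zero (by rw [ht, h, mul_zero])
        have hfp : f.natDegree = p.natDegree := by
          rw [ht, Polynomial.natDegree_mul hpirr.ne_zero ht0,
            Polynomial.natDegree_eq_zero_of_isUnit htu, add_zero]
        have hple : p.natDegree ≤ g.natDegree :=
          Polynomial.natDegree_le_of_dvd
            (UniqueFactorizationMonoid.dvd_of_mem_normalizedFactors hpP) hg0
        omega
      have hprime : Prime p := UniqueFactorizationMonoid.irreducible_iff_prime.mp hpirr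
      have hsq : p ^ 2 ∣ f * g := by
        refine ⟨eval (map (Polynomial.C : F →+* Polynomial F) c) η, ?_⟩
        rw [← heq, hξη, eval_smul]
      have hg2 : p ^ 2 ∣ g := hprime.pow_dvd_of_dvd_mul_left 2 hpf hsq
      obtain ⟨g₂, hg₂⟩ := hg2
      have hg₂0 : g₂ ≠ 0 := fun h => hg0 (by rw [hg₂, h, mul_zero])
      have heval₂ : eval (map (Polynomial.C : F →+* Polynomial F) c) η = f * g₂ := by
        have hp2 : (p : Polynomial F) ^ 2 ≠ 0 := pow_ne_zero _ hpirr.ne_zero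
        apply mul_left_cancel₀ hp2
        have h3 : p ^ 2 * eval (map (Polynomial.C : F →+* Polynomial F) c) η
            = eval (map (Polynomial.C : F →+* Polynomial F) c) ξ := by
          rw [hξη, eval_smul]
        rw [h3, heq, hg₂]; ring
      have hdegp : 1 ≤ p.natDegree := hpirr.natDegree_pos
      have hdegg₂ : g₂.natDegree + 2 ≤ g.natDegree := by
        have hmul : g.natDegree = (p ^ 2).natDegree + g₂.natDegree := by
          rw [hg₂, Polynomial.natDegree_mul (pow_ne_zero 2 hpirr.ne_zero) hg₂0]
        have hpow : (p ^ 2).natDegree = 2 * p.natDegree := by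
          rw [Polynomial.natDegree_pow]
        omega
      obtain ⟨m, hm, hmem⟩ := ihk g₂ η (by omega) hg₂0 hη0 (by omega) heval₂
      exact ⟨m, by omega, hmem⟩
    · push_neg at hcaseA
      have hAinj : Function.Injective
          (algebraMap (Polynomial F) (FractionRing (Polynomial F))) :=
        IsFractionRing.injective _ _
      have hAne : ∀ {q : Polynomial F}, q ≠ 0 →
          algebraMap (Polynomial F) (FractionRing (Polynomial F)) q ≠ 0 := by
        intro q hq h; exact hq (hAinj (by rw [h, map_zero]))
      obtain ⟨v, hv, hdegeq, hlead⟩ := aniso_info c hc ξ hξ0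
      obtain ⟨u, hu⟩ := (UniqueFactorizationMonoid.prod_normalizedFactors hg0)
      obtain ⟨b, hbu, hCb⟩ := Polynomial.isUnit_iff.mp u.isUnit
      have hPmonic : ∀ p ∈ UniqueFactorizationMonoid.normalizedFactors g, Polynomial.Monic p := by
        intro p hp
        have hnp := UniqueFactorizationMonoid.normalize_normalized_factor p hp
        rw [← hnp]
        exact Polynomial.monic_normalize
          (UniqueFactorizationMonoid.irreducible_of_normalized_factor p hp).ne_zero
      have hProdMonic : (UniqueFactorizationMonoid.normalizedFactors g).prod.Monic := by
        have := Polynomial.monic_multiset_prod_of_monic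
          (UniqueFactorizationMonoid.normalizedFactors g) id (fun p hp => hPmonic p hp)
        simpa using this
      have hb : g.leadingCoeff = b := by
        rw [← hu, Polynomial.leadingCoeff_mul, hProdMonic.leadingCoeff, one_mul, ← hCb,
          Polynomial.leadingCoeff_C]
      have hlcg : eval c v = g.leadingCoeff := by
        have h2 := Polynomial.leadingCoeff_mul f g
        rw [← heq, hlead, hmonic.leadingCoeff, one_mul] at h2
        exact h2
      have hevalcv : eval c v ≠ 0 := hv
      -- e1
      have hgK : algebraMap (Polynomial F) (FractionRing (Polynomial F)) g ≠ 0 := hAne hg0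
      have hfK : algebraMap (Polynomial F) (FractionRing (Polynomial F)) f ≠ 0 :=
        hAne hmonic.ne_zero
      have hevalK : eval (map (ratHom1 F) c)
            (fun i => algebraMap (Polynomial F) (FractionRing (Polynomial F)) (ξ i))
          = algebraMap (Polynomial F) (FractionRing (Polynomial F))
              (eval (map (Polynomial.C : F →+* Polynomial F) c) ξ) :=
        eval_ringHom_map (algebraMap (Polynomial F) (FractionRing (Polynomial F)))
          (map (Polynomial.C : F →+* Polynomial F) c) ξ
      have he1 : eval (map (ratHom1 F) c)
            ((algebraMap (Polynomial F) (FractionRing (Polynomial F)) g)⁻¹ •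
              (fun i => algebraMap (Polynomial F) (FractionRing (Polynomial F)) (ξ i)))
          = algebraMap (Polynomial F) (FractionRing (Polynomial F)) f *
              (algebraMap (Polynomial F) (FractionRing (Polynomial F)) g)⁻¹ := by
        rw [eval_smul, hevalK, heq, map_mul]
        field_simp
      have e1mem : algebraMap (Polynomial F) (FractionRing (Polynomial F)) f *
            (algebraMap (Polynomial F) (FractionRing (Polynomial F)) g)⁻¹
          ∈ reps (map (ratHom1 F) c) :=
        ⟨mul_ne_zero hfK (inv_ne_zero hgK), _, he1⟩
      have hbne : b ≠ 0 := hbu.ne_zero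
      have hCbne : algebraMap (Polynomial F) (FractionRing (Polynomial F)) (Polynomial.C b) ≠ 0 :=
        hAne (Polynomial.C_ne_zero.mpr hbne)
      have bmem : algebraMap (Polynomial F) (FractionRing (Polynomial F)) (Polynomial.C b)
          ∈ reps (map (ratHom1 F) c) := by
        refine ⟨hCbne, fun i => ratHom1 F (v i), ?_⟩
        rw [eval_ringHom_map (ratHom1 F) c v]
        show algebraMap (Polynomial F) (FractionRing (Polynomial F))
          (Polynomial.C (eval c v)) = _
        rw [hlcg, hb]
      have hPmem : ∀ p ∈ UniqueFactorizationMonoid.normalizedFactors g,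
          ∃ m ≤ p.natDegree, algebraMap (Polynomial F) (FractionRing (Polynomial F)) p
            ∈ repsPow (map (ratHom1 F) c) m := by
        intro p hp
        have hpirr := UniqueFactorizationMonoid.irreducible_of_normalized_factor p hp
        have hpg : p ∣ g := UniqueFactorizationMonoid.dvd_of_mem_normalizedFactors hp
        have hdp : p.natDegree < f.natDegree := by
          have := Polynomial.natDegree_le_of_dvd hpg hg0; omega
        have hpφ : p ∣ eval (map (Polynomial.C : F →+* Polynomial F) c) ξ := by
          rw [heq]; exact hpg.mul_left f
        obtain ⟨i, hi⟩ := hcaseA p hp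
        exact IH p hdp (hPmonic p hp) hpirr ξ hpφ (fun h => hi (h i))
      obtain ⟨M, hM, hMmem⟩ := repsPow_multiset_prod (map (ratHom1 F) c)
        ((algebraMap (Polynomial F) (FractionRing (Polynomial F))) : Polynomial F →+* _)
        (UniqueFactorizationMonoid.normalizedFactors g) hPmem
      have hMsum : ((UniqueFactorizationMonoid.normalizedFactors g).map
            Polynomial.natDegree).sum
          = (UniqueFactorizationMonoid.normalizedFactors g).prod.natDegree :=
        (Polynomial.natDegree_multiset_prod _
          (UniqueFactorizationMonoid.zero_notMem_normalizedFactors g)).symm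
      have hProdle : (UniqueFactorizationMonoid.normalizedFactors g).prod.natDegree
          ≤ g.natDegree :=
        Polynomial.natDegree_le_of_dvd ⟨(u : Polynomial F), hu.symm⟩ hg0
      have hPne : algebraMap (Polynomial F) (FractionRing (Polynomial F))
          (UniqueFactorizationMonoid.normalizedFactors g).prod ≠ 0 := hAne hProdMonic.ne_zero
      have hgfact : algebraMap (Polynomial F) (FractionRing (Polynomial F)) g
          = algebraMap (Polynomial F) (FractionRing (Polynomial F))
              (UniqueFactorizationMonoid.normalizedFactors g).prod *
            algebraMap (Polynomial F) (FractionRing (Polynomial F)) (Polynomial.C b) := by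
        rw [← map_mul, hCb, hu]
      have hfactor : algebraMap (Polynomial F) (FractionRing (Polynomial F)) f
          = (algebraMap (Polynomial F) (FractionRing (Polynomial F)) f *
              (algebraMap (Polynomial F) (FractionRing (Polynomial F)) g)⁻¹) *
            algebraMap (Polynomial F) (FractionRing (Polynomial F)) (Polynomial.C b) *
            algebraMap (Polynomial F) (FractionRing (Polynomial F))
              (UniqueFactorizationMonoid.normalizedFactors g).prod := by
        rw [hgfact]
        field_simp
      refine ⟨1 + 1 + M, by omega, ?_⟩
      rw [hfactor]
      exact repsPow_mul_mem (repsPow_mul_mem (repsPow_one_of_reps e1mem)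
        (repsPow_one_of_reps bmem)) hMmem

lemma aniso_main {F : Type u} [Field F] {ι : Type} [Fintype ι]
    (c : ι → ι → F) (hc : IsAnisotropic c) :
    ∀ (N : ℕ) (f : Polynomial F), f.natDegree ≤ N → f.Monic → Irreducible f →
      ∀ ξ : ι → Polynomial F, f ∣ eval (map (Polynomial.C : F →+* Polynomial F) c) ξ →
      (¬ ∀ i, f ∣ ξ i) →
      ∃ m ≤ f.natDegree,
        algebraMap (Polynomial F) (FractionRing (Polynomial F)) f
          ∈ repsPow (map (ratHom1 F) c) m := by
  intro N
  induction N with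
  | zero =>
    intro f hN _ hirr
    exact absurd hN (by have := hirr.natDegree_pos; omega)
  | succ N ihN =>
    intro f hN hmonic hirr ξ hdvd hnotall
    obtain ⟨ξ', hξ'def⟩ : ∃ ξ' : ι → Polynomial F, ξ' = fun i => ξ i %ₘ f := ⟨_, rfl⟩
    obtain ⟨q, hqdef⟩ : ∃ q : ι → Polynomial F, q = fun i => ξ i /ₘ f := ⟨_, rfl⟩
    have hsplit : ξ' + f • q = ξ := by
      funext i
      rw [hξ'def, hqdef]
      simp only [Pi.add_apply, Pi.smul_apply, smul_eq_mul]
      exact Polynomial.modByMonic_add_div (ξ i) f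
    have hkey : eval (map (Polynomial.C : F →+* Polynomial F) c) ξ
        = eval (map (Polynomial.C : F →+* Polynomial F) c) ξ'
          + (f ^ 2 * eval (map (Polynomial.C : F →+* Polynomial F) c) q
            + f * polar (map (Polynomial.C : F →+* Polynomial F) c) q ξ') := by
      rw [← hsplit, eval_add, eval_smul, polar_comm', polar_smul_left]
      ring
    have hdvd' : f ∣ eval (map (Polynomial.C : F →+* Polynomial F) c) ξ' := by
      have h2 : eval (map (Polynomial.C : F →+* Polynomial F) c) ξ'
          = eval (map (Polynomial.C : F →+* Polynomial F) c) ξ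
            - (f ^ 2 * eval (map (Polynomial.C : F →+* Polynomial F) c) q
              + f * polar (map (Polynomial.C : F →+* Polynomial F) c) q ξ') := by
        rw [hkey]; ring
      rw [h2]
      refine dvd_sub hdvd (dvd_add ?_ ?_)
      · exact ((dvd_pow_self f two_ne_zero).mul_right _)
      · exact (dvd_refl f).mul_right _
    have hξ'0 : ξ' ≠ 0 := by
      intro h
      apply hnotall
      intro i
      have hzi : ξ i %ₘ f = 0 := by
        have h2 := congrFun h i
        rw [hξ'def] at h2
        simpa using h2
      exact (Polynomial.modByMonic_eq_zero_iff_dvd hmonic).mp hzi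
    have hfpos : 0 < f.natDegree := hirr.natDegree_pos
    have hdle : ∀ i, (ξ' i).natDegree < f.natDegree := by
      intro i
      rw [hξ'def]
      by_cases h : ξ i %ₘ f = 0
      · simp only [h, Polynomial.natDegree_zero]; exact hfpos
      · exact Polynomial.natDegree_lt_natDegree h (Polynomial.degree_modByMonic_lt (ξ i) hmonic)
    obtain ⟨g, hg⟩ := hdvd'
    have hφne : eval (map (Polynomial.C : F →+* Polynomial F) c) ξ' ≠ 0 :=
      eval_ne_zero_of_aniso c hc ξ' hξ'0
    have hg0 : g ≠ 0 := by
      rintro rfl; rw [mul_zero] at hg; exact hφne hg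
    obtain ⟨v, hv, hdeq, hlead⟩ := aniso_info c hc ξ' hξ'0
    have hsup : (Finset.univ.sup fun i => ((ξ' i)).natDegree) < f.natDegree := by
      refine Finset.sup_lt_iff ?_ |>.mpr fun i _ => hdle i
      exact hfpos
    have hbound : g.natDegree + 2 ≤ f.natDegree := by
      have h1 : (eval (map (Polynomial.C : F →+* Polynomial F) c) ξ').natDegree
          = f.natDegree + g.natDegree := by
        rw [hg, Polynomial.natDegree_mul hmonic.ne_zero hg0]
      omega
    have IH' : ∀ p : Polynomial F, p.natDegree < f.natDegree → p.Monic → Irreducible p →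
        ∀ ζ : ι → Polynomial F, p ∣ eval (map (Polynomial.C : F →+* Polynomial F) c) ζ →
        (¬ ∀ i, p ∣ ζ i) →
        ∃ m ≤ p.natDegree,
          algebraMap (Polynomial F) (FractionRing (Polynomial F)) p
            ∈ repsPow (map (ratHom1 F) c) m := by
      intro p hp hpm hpi ζ h1 h2
      exact ihN p (by omega) hpm hpi ζ h1 h2
    obtain ⟨m, hm, hmem⟩ := inner_lemma c hc f hmonic hirr IH' (g.natDegree + 1) g ξ'
      (by omega) hg0 hξ'0 hbound hg
    exact ⟨m, by omega, hmem⟩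

end Stmt7Aux

/-- Let `F` be a field of characteristic 2, `f ∈ F[X]` a monic
irreducible polynomial in one variable, and `φ` a nondefective quadratic form over `F`.
Suppose `f` divides `φ(ξ₁,…,ξₙ)` for some `ξᵢ ∈ F[X]` not all divisible by `f`.
Then `f ∈ D^*_{F(X)}(φ)^m` for some `m ≤ deg f`. -/
theorem stmt7 {F : Type u} [Field F] [CharP F 2] {ι : Type} [Fintype ι]
    (c : ι → ι → F) (hnd : IsNondefective c)
    (f : Polynomial F) (hmonic : f.Monic) (hirr : Irreducible f)
    (ξ : ι → Polynomial F)
    (hdvd : f ∣ eval (map (Polynomial.C : F →+* Polynomial F) c) ξ)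
    (hnotall : ¬ ∀ i, f ∣ ξ i) :
    ∃ m ≤ f.natDegree,
      algebraMap (Polynomial F) (FractionRing (Polynomial F)) f
        ∈ repsPow (map (ratHom1 F) c) m := by
  by_cases hc : IsIsotropic c
  · obtain ⟨v, hv0, hveval⟩ := hc
    have hpol : ∃ y, polar c v y ≠ 0 := by
      by_contra h; push_neg at h; exact hv0 (hnd v h hveval)
    obtain ⟨y, hy⟩ := hpol
    have hAinj : Function.Injective
        (algebraMap (Polynomial F) (FractionRing (Polynomial F))) :=
      IsFractionRing.injective _ _
    have hfK : algebraMap (Polynomial F) (FractionRing (Polynomial F)) f ≠ 0 :=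
      fun h => hmonic.ne_zero (hAinj (by rw [h, map_zero]))
    have hσinj : Function.Injective (ratHom1 F) := (ratHom1 F).injective
    have hb : ratHom1 F (polar c v y) ≠ 0 :=
      fun h => hy (hσinj (by rw [h, map_zero]))
    set α : FractionRing (Polynomial F) :=
      (algebraMap (Polynomial F) (FractionRing (Polynomial F)) f - ratHom1 F (eval c y)) /
        ratHom1 F (polar c v y) with hα
    refine ⟨1, hirr.natDegree_pos, ?_⟩
    refine repsPow_one_of_reps ⟨hfK, α • (fun i => ratHom1 F (v i)) + (fun i => ratHom1 F (y i)), ?_⟩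
    rw [eval_add, eval_smul, polar_smul_left, eval_ringHom_map, eval_ringHom_map,
      polar_ringHom_map, hveval, map_zero, mul_zero, zero_add]
    rw [hα, div_mul_cancel₀ _ hb]
    ring
  · exact aniso_main c hc f.natDegree f le_rfl hmonic hirr ξ hdvd hnotall

end QF2
end
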